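/- Let $a_1, \dots, a_n \le -2$ be integers and let $(y_0, \dots, y_n)$ with $y_n = 1$, $y_j > 0$ for $j \ge 1$, satisfy the recursions $-y_0 = -(a_1+1)y_1 - y_2$ and $y_{j-1} = -a_j y_j - y_{j+1}$ for $2 \le j \le n$ (with $y_{n+1} = 0$). Then $\frac{(a_1+1, a_2+2, \dots, a_n+2) \cdot (y_1, \dots, y_n)}{y_0} + \frac{y_1}{y_0} - 1 = \frac{1}{y_0}$. -/

import Mathlib

/-- the `d₃`-invariant computation
`((a₁+1,a₂+2,…,aₙ+2)·(y₁,…,yₙ))/y₀ + y₁/y₀ - 1 = 1/y₀`. -/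
theorem stmt16 (n : ℕ) (hn : 1 ≤ n) (a y : ℕ → ℤ)
    (ha : ∀ i, 1 ≤ i → i ≤ n → a i ≤ -2)
    (hyn : y n = 1) (htail : ∀ j, n + 1 ≤ j → y j = 0)
    (hpos : ∀ j, 1 ≤ j → j ≤ n → 0 < y j)
    (h1 : -y 0 = -(a 1 + 1) * y 1 - y 2)
    (hrec : ∀ j, 2 ≤ j → j ≤ n → y (j - 1) = -a j * y j - y (j + 1)) :
    (((a 1 + 1) * y 1 + ∑ j ∈ Finset.Icc 2 n, (a j + 2) * y j : ℤ) : ℚ) / (y 0 : ℚ)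
      + (y 1 : ℚ) / (y 0 : ℚ) - 1 = 1 / (y 0 : ℚ) := by
  -- strict decrease: y j > y (j+1) for 1 ≤ j ≤ n
  have key : ∀ k j : ℕ, j = n - k → 1 ≤ j → j ≤ n → y (j + 1) < y j := by
    intro k
    induction k with
    | zero =>
      intro j hj _ _
      have hje : j = n := by omega
      rw [hje, hyn, htail (n + 1) le_rfl]; norm_num
    | succ k ih =>
      intro j hj h1j hjn
      rcases eq_or_lt_of_le hjn with h | h
      · subst h
        rw [hyn, htail (j + 1) le_rfl]; norm_num
      · have hj1 : j + 1 = n - k ∨ j + 1 < n - k := by omega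
        have hlt : y (j + 1 + 1) < y (j + 1) := by
          rcases hj1 with h' | h'
          · exact ih (j + 1) h' (by omega) (by omega)
          · omega
        have hr := hrec (j + 1) (by omega) (by omega)
        simp only [Nat.add_sub_cancel] at hr
        have hpos1 : 0 < y (j + 1) := hpos (j + 1) (by omega) (by omega)
        have haj : a (j + 1) ≤ -2 := ha (j + 1) (by omega) (by omega)
        nlinarith [hr, hlt, hpos1, haj]
  have hy12 : y 2 < y 1 := key (n - 1) 1 (by omega) le_rfl hn
  have hy1pos : 0 < y 1 := hpos 1 le_rfl hn
  have ha1 : a 1 ≤ -2 := ha 1 le_rfl hn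
  have hy0neg : y 0 < 0 := by nlinarith
  have hy0 : (y 0 : ℚ) ≠ 0 := by exact_mod_cast hy0neg.ne
  -- telescoping sum
  have hterm : ∀ j ∈ Finset.Icc 2 n, (a j + 2) * y j
      = (y j - y (j + 1)) - (y (j - 1) - y j) := by
    intro j hj
    rw [Finset.mem_Icc] at hj
    have hr := hrec j hj.1 hj.2
    linarith
  have hsum : ∑ j ∈ Finset.Icc 2 n, (a j + 2) * y j
      = (y 2 - y (n + 1)) - (y 1 - y n) := by
    rw [Finset.sum_congr rfl hterm, Finset.sum_sub_distrib,
      show Finset.Icc 2 n = Finset.Ico 2 (n + 1) by rw [Finset.Ico_add_one_right_eq_Icc],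
      Finset.sum_Ico_eq_sum_range, Finset.sum_Ico_eq_sum_range]
    have h2 : ∑ i ∈ Finset.range (n + 1 - 2), (y (2 + i) - y (2 + i + 1))
        = y 2 - y (n + 1) := by
      have := Finset.sum_range_sub' (fun i => y (2 + i)) (n + 1 - 2)
      rw [show (2 + (n + 1 - 2)) = n + 1 by omega] at this
      rw [← this]
      apply Finset.sum_congr rfl
      intro i _
      congr 2 <;> omega
    have h3 : ∑ i ∈ Finset.range (n + 1 - 2), (y (2 + i - 1) - y (2 + i))
        = y 1 - y n := by
      have := Finset.sum_range_sub' (fun i => y (1 + i)) (n + 1 - 2)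
      rw [show (1 + (n + 1 - 2)) = n by omega] at this
      rw [← this]
      apply Finset.sum_congr rfl
      intro i _
      congr 2 <;> omega
    rw [h2, h3]
  have hyn1 : y (n + 1) = 0 := htail (n + 1) le_rfl
  have main : (a 1 + 1) * y 1 + ∑ j ∈ Finset.Icc 2 n, (a j + 2) * y j + y 1
      = y 0 + 1 := by
    rw [hsum, hyn, hyn1]; linarith
  have main2 : ((a 1 + 1) * y 1 + ∑ j ∈ Finset.Icc 2 n, (a j + 2) * y j : ℤ)
      = y 0 + 1 - y 1 := by linarith
  have : (((a 1 + 1) * y 1 + ∑ j ∈ Finset.Icc 2 n, (a j + 2) * y j : ℤ) : ℚ)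
      = ((y 0 + 1 - y 1 : ℤ) : ℚ) := by exact_mod_cast main2
  rw [this]
  field_simp
  push_cast
  ring
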